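/- Let g₂, g₃ be complex numbers and let x₀(B) = (B³ + 27g₃)/(9(B² − 3g₂)) and w(B) = 2(B³ − 9g₂B − 54g₃)/(27(B² − 3g₂)²). Then for every B ∈ ℂ with B² ≠ 3g₂, the complex derivative of x₀ at B equals (3/2)B · w(B). Consequently the pullback under the ℓ=2 covering of the holomorphic differential dx₀/y₀ on the elliptic curve is the differential (3/2)B dB/ν on the spectral curve ν² = 𝖫₂(B), giving the hyperelliptic-to-elliptic reduction ∫ (3/2)B dB/√((B² − 3g₂)(B³ − (9/4)g₂B + (27/4)g₃)) = ∫ dx₀/√(4x₀³ − g₂x₀ − g₃). -/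

import Mathlib

/-- For `x₀(B) = (B³ + 27g₃)/(9(B² − 3g₂))` and
`w(B) = 2(B³ − 9g₂B − 54g₃)/(27(B² − 3g₂)²)`, at every `B` with `B² ≠ 3g₂` the complex
derivative of `x₀` equals `(3/2)B ⬝ w(B)`.  This is the ℓ=2 hyperelliptic-to-elliptic
reduction: the pullback of the holomorphic differential `dx₀/y₀` under the ℓ=2
Hermite–Krichever covering is `(3/2)B dB/ν` on the spectral curve `ν² = 𝖫₂(B)`. -/
theorem lame_HK_reduction_l2_deriv (g₂ g₃ B : ℂ) (hB : B ^ 2 ≠ 3 * g₂) :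
    HasDerivAt (fun z : ℂ => (z ^ 3 + 27 * g₃) / (9 * (z ^ 2 - 3 * g₂)))
      ((3 / 2) * B * (2 * (B ^ 3 - 9 * g₂ * B - 54 * g₃) / (27 * (B ^ 2 - 3 * g₂) ^ 2)))
      B := by
  have hsub : B ^ 2 - 3 * g₂ ≠ 0 := sub_ne_zero.mpr hB
  have hden : (9 : ℂ) * (B ^ 2 - 3 * g₂) ≠ 0 := by
    exact mul_ne_zero (by norm_num) hsub
  have h1 : HasDerivAt (fun z : ℂ => z ^ 3 + 27 * g₃) (3 * B ^ 2) B := by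
    simpa using ((hasDerivAt_pow 3 B).add_const (27 * g₃))
  have h2 : HasDerivAt (fun z : ℂ => 9 * (z ^ 2 - 3 * g₂)) (9 * (2 * B)) B := by
    have := ((hasDerivAt_pow 2 B).sub_const (3 * g₂)).const_mul (9 : ℂ)
    simpa using this
  have := h1.div h2 hden
  refine this.congr_deriv ?_
  field_simp
  ring
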